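/- Let X and Y be Banach spaces and let f : ℝ × Y → X be pseudo-almost automorphic in t uniformly in the second variable. Suppose that for each bounded subset K of Y, x ↦ f(t,x) is uniformly continuous on K uniformly in t ∈ ℝ (i.e., for every ε > 0 there is δ > 0 such that ‖f(t,x) − f(t,y)‖ ≤ ε for all t ∈ ℝ and x, y ∈ K with ‖x−y‖_Y ≤ δ). Then for every φ ∈ PAA(Y), the function h(t) := f(t, φ(t)) belongs to PAA(X). -/

import Mathlib

open MeasureTheory Filter Topology Bornology

noncomputable section

/-- A continuous function `f : ℝ → Z` is almost automorphic if for every sequence of reals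
there is a subsequence `s ∘ k` and a function `g` with `f (t + s (k n)) → g t` and
`g (t - s (k n)) → f t` pointwise in norm. -/
def AlmostAutomorphicFn {Z : Type*} [NormedAddCommGroup Z] (f : ℝ → Z) : Prop :=
  Continuous f ∧ ∀ s' : ℕ → ℝ, ∃ k : ℕ → ℕ, StrictMono k ∧ ∃ g : ℝ → Z,
    (∀ t : ℝ, Tendsto (fun n => f (t + s' (k n))) atTop (𝓝 (g t))) ∧
    (∀ t : ℝ, Tendsto (fun n => g (t - s' (k n))) atTop (𝓝 (f t)))

/-- `PAPZeroFn f` : `f` is bounded continuous and `(1/(2r)) ∫_{-r}^r ‖f s‖ ds → 0` as `r → ∞`. -/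
def PAPZeroFn {Z : Type*} [NormedAddCommGroup Z] (f : ℝ → Z) : Prop :=
  Continuous f ∧ (∃ M : ℝ, ∀ t : ℝ, ‖f t‖ ≤ M) ∧
  Tendsto (fun r : ℝ => (1 / (2 * r)) * ∫ s in (-r)..r, ‖f s‖) atTop (𝓝 0)

/-- A bounded continuous function is pseudo-almost automorphic if it decomposes as the sum of
an almost automorphic function and an ergodic (`PAPZeroFn`) perturbation. -/
def PseudoAlmostAutomorphicFn {Z : Type*} [NormedAddCommGroup Z] (f : ℝ → Z) : Prop :=
  Continuous f ∧ (∃ M : ℝ, ∀ t : ℝ, ‖f t‖ ≤ M) ∧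
  ∃ g φ : ℝ → Z, AlmostAutomorphicFn g ∧ PAPZeroFn φ ∧ ∀ t : ℝ, f t = g t + φ t

/-- `F : ℝ × Y → X` jointly continuous, almost automorphic in `t` uniformly for the second
variable in bounded sets. -/
def AAUnifFn {Y X : Type*} [NormedAddCommGroup Y] [NormedAddCommGroup X]
    (F : ℝ → Y → X) : Prop :=
  Continuous (fun p : ℝ × Y => F p.1 p.2) ∧
  ∀ K : Set Y, IsBounded K → ∀ s' : ℕ → ℝ, ∃ k : ℕ → ℕ, StrictMono k ∧
    ∃ G : ℝ → Y → X,
      (∀ t : ℝ, ∀ x ∈ K, Tendsto (fun n => F (t + s' (k n)) x) atTop (𝓝 (G t x))) ∧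
      (∀ t : ℝ, ∀ x ∈ K, Tendsto (fun n => G (t - s' (k n)) x) atTop (𝓝 (F t x)))

/-- Bounded continuous `F` with `(1/(2r)) ∫_{-r}^r ‖F (s, x)‖ ds → 0` as `r → ∞`,
uniformly for `x` in bounded subsets of `Y`. -/
def PAPZeroUnifFn {Y X : Type*} [NormedAddCommGroup Y] [NormedAddCommGroup X]
    (F : ℝ → Y → X) : Prop :=
  Continuous (fun p : ℝ × Y => F p.1 p.2) ∧
  (∀ K : Set Y, IsBounded K → ∃ M : ℝ, ∀ t : ℝ, ∀ x ∈ K, ‖F t x‖ ≤ M) ∧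
  ∀ K : Set Y, IsBounded K → ∀ ε > (0 : ℝ), ∃ r₀ : ℝ, 0 < r₀ ∧ ∀ r ≥ r₀, ∀ x ∈ K,
    (1 / (2 * r)) * (∫ s in (-r)..r, ‖F s x‖) ≤ ε

/-- `F` is pseudo-almost automorphic in `t` uniformly in the second variable. -/
def PAAUnifFn {Y X : Type*} [NormedAddCommGroup Y] [NormedAddCommGroup X]
    (F : ℝ → Y → X) : Prop :=
  ∃ G Φ : ℝ → Y → X, AAUnifFn G ∧ PAPZeroUnifFn Φ ∧ ∀ (t : ℝ) (x : Y), F t x = G t x + Φ t x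

lemma aa_bounded {Z : Type*} [NormedAddCommGroup Z] {f : ℝ → Z}
    (hf : AlmostAutomorphicFn f) : ∃ M : ℝ, ∀ t, ‖f t‖ ≤ M := by
  by_contra h
  push_neg at h
  have hsel : ∀ n : ℕ, ∃ t : ℝ, (n : ℝ) < ‖f t‖ := fun n => h n
  choose t ht using hsel
  obtain ⟨k, hk, g, hg1, _⟩ := hf.2 t
  have h0 := (hg1 0).norm
  obtain ⟨C, hC⟩ : ∃ C, ∀ n, ‖f (0 + t (k n))‖ ≤ C := by
    obtain ⟨C, hC⟩ := h0.bddAbove_range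
    exact ⟨C, fun n => hC ⟨n, rfl⟩⟩
  obtain ⟨n, hn⟩ := exists_nat_gt C
  have h1 : (k n : ℝ) < ‖f (t (k n))‖ := ht (k n)
  have h2 : (n : ℝ) ≤ (k n : ℝ) := by exact_mod_cast hk.le_apply
  have := hC n
  simp only [zero_add] at this
  linarith
lemma aaunif_apply {Y X : Type*} [NormedAddCommGroup Y] [NormedAddCommGroup X]
    {G : ℝ → Y → X} (hG : AAUnifFn G) (x : Y) :
    AlmostAutomorphicFn (fun t => G t x) := by
  refine ⟨hG.1.comp (continuous_id.prodMk continuous_const), fun s' => ?_⟩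
  obtain ⟨k, hk, G', hG1, hG2⟩ := hG.2 {x} (Set.finite_singleton x).isBounded s'
  exact ⟨k, hk, fun t => G' t x, fun t => hG1 t x rfl, fun t => hG2 t x rfl⟩

lemma aa_net {Z : Type*} [NormedAddCommGroup Z] {g : ℝ → Z}
    (hg : AlmostAutomorphicFn g) {η : ℝ} (hη : 0 < η) :
    ∃ L : Finset ℝ, ∀ t : ℝ, ∃ s ∈ L, ‖g t - g s‖ < η := by
  classical
  by_contra h
  push_neg at h
  have hpick : ∀ L : Finset ℝ, ∃ t : ℝ, ∀ s ∈ L, η ≤ ‖g t - g s‖ := by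
    intro L
    obtain ⟨t, ht⟩ := h L
    exact ⟨t, ht⟩
  choose w hw using hpick
  -- build increasing family of finsets
  let F : ℕ → Finset ℝ := fun n => Nat.rec (∅ : Finset ℝ) (fun _ L => insert (w L) L) n
  let t : ℕ → ℝ := fun n => w (F n)
  have hFsucc : ∀ n, F (n + 1) = insert (t n) (F n) := fun n => rfl
  have hmono : ∀ m n, m ≤ n → F m ⊆ F n := by
    intro m n hmn
    induction n with
    | zero => simp_all
    | succ n ih =>
      rcases Nat.lt_or_ge m (n+1) with h1 | h1
      · exact (ih (Nat.lt_succ_iff.1 h1)).trans (by rw [hFsucc]; exact Finset.subset_insert _ _)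
      · have : m = n + 1 := le_antisymm hmn h1
        subst this; rfl
  have hsep : ∀ m n, m < n → η ≤ ‖g (t n) - g (t m)‖ := by
    intro m n hmn
    have : t m ∈ F n := hmono (m+1) n hmn (by rw [hFsucc]; exact Finset.mem_insert_self _ _)
    exact hw (F n) (t m) this
  obtain ⟨k, hk, gbar, hg1, _⟩ := hg.2 t
  have hconv := hg1 0
  have hcauchy : CauchySeq (fun n => g (0 + t (k n))) := hconv.cauchySeq
  rw [Metric.cauchySeq_iff] at hcauchy
  obtain ⟨N, hN⟩ := hcauchy η hη
  have h1 := hN (N+1) (by omega) N (by omega)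
  have h2 := hsep (k N) (k (N+1)) (hk (by omega))
  rw [dist_eq_norm] at h1
  simp only [zero_add] at h1
  linarith

lemma chain_bound {Y X : Type*} [NormedAddCommGroup Y] [NormedSpace ℝ Y] [NormedAddCommGroup X]
    {F : ℝ → Y → X} {R : ℝ}
    (huc : ∀ ε > (0:ℝ), ∃ η > (0:ℝ), ∀ t : ℝ, ∀ x ∈ Metric.closedBall (0:Y) R,
      ∀ y ∈ Metric.closedBall (0:Y) R, ‖x - y‖ ≤ η → ‖F t x - F t y‖ ≤ ε) :
    ∃ B : ℝ, ∀ t : ℝ, ∀ x ∈ Metric.closedBall (0:Y) R, ∀ y ∈ Metric.closedBall (0:Y) R,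
      ‖F t x - F t y‖ ≤ B := by
  obtain ⟨η, hη, huc1⟩ := huc 1 one_pos
  obtain ⟨N, hN⟩ := exists_nat_gt (2 * |R| / η)
  have hN1 : 1 ≤ N := by
    by_contra hc
    interval_cases N
    · simp at hN
      nlinarith [abs_nonneg R, div_nonneg (by nlinarith [abs_nonneg R] : (0:ℝ) ≤ 2*|R|) hη.le]
  refine ⟨N, fun t x hx y hy => ?_⟩
  rw [Metric.mem_closedBall, dist_zero_right] at hx hy
  have hR : 0 ≤ R := le_trans (norm_nonneg x) hx
  set z : ℕ → Y := fun j => y + ((j : ℝ)/(N : ℝ)) • (x - y) with hz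
  have hNpos : (0:ℝ) < N := by exact_mod_cast hN1
  have hzK : ∀ j : ℕ, j ≤ N → ‖z j‖ ≤ R := by
    intro j hj
    have hc0 : (0:ℝ) ≤ (j:ℝ)/(N:ℝ) := by positivity
    have hc1 : (j:ℝ)/(N:ℝ) ≤ 1 := by
      rw [div_le_one hNpos]; exact_mod_cast hj
    have : z j = (1 - (j:ℝ)/(N:ℝ)) • y + ((j:ℝ)/(N:ℝ)) • x := by
      simp only [hz]; module
    rw [this]
    calc ‖(1 - (j:ℝ)/(N:ℝ)) • y + ((j:ℝ)/(N:ℝ)) • x‖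
        ≤ ‖(1 - (j:ℝ)/(N:ℝ)) • y‖ + ‖((j:ℝ)/(N:ℝ)) • x‖ := norm_add_le _ _
      _ = (1 - (j:ℝ)/(N:ℝ)) * ‖y‖ + ((j:ℝ)/(N:ℝ)) * ‖x‖ := by
          rw [norm_smul, norm_smul, Real.norm_of_nonneg (by linarith), Real.norm_of_nonneg hc0]
      _ ≤ (1 - (j:ℝ)/(N:ℝ)) * R + ((j:ℝ)/(N:ℝ)) * R := by
          gcongr <;> linarith
      _ = R := by ring
  have hstep : ∀ j : ℕ, ‖z (j+1) - z j‖ ≤ η := by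
    intro j
    have : z (j+1) - z j = ((1:ℝ)/(N:ℝ)) • (x - y) := by
      simp only [hz]; push_cast; module
    rw [this, norm_smul, Real.norm_of_nonneg (by positivity)]
    have hxy : ‖x - y‖ ≤ 2 * |R| := by
      calc ‖x - y‖ ≤ ‖x‖ + ‖y‖ := norm_sub_le _ _
        _ ≤ 2 * |R| := by rw [abs_of_nonneg hR]; linarith
    calc (1/(N:ℝ)) * ‖x - y‖ ≤ (1/(N:ℝ)) * (2 * |R|) := mul_le_mul_of_nonneg_left hxy (by positivity)
      _ = 2 * |R| / N := by ring
      _ ≤ η := by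
        rw [div_le_iff₀ hNpos]
        calc 2 * |R| = 2 * |R| / η * η := by field_simp
          _ ≤ (N:ℝ) * η := mul_le_mul_of_nonneg_right hN.le hη.le
          _ = η * N := by ring
  have key : ∀ j : ℕ, j ≤ N → ‖F t (z j) - F t (z 0)‖ ≤ j := by
    intro j
    induction j with
    | zero => intro _; simp
    | succ j ih =>
      intro hj
      have hj' : j ≤ N := by omega
      calc ‖F t (z (j+1)) - F t (z 0)‖
          ≤ ‖F t (z (j+1)) - F t (z j)‖ + ‖F t (z j) - F t (z 0)‖ := norm_sub_le_norm_sub_add_norm_sub _ _ _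
        _ ≤ 1 + j := by
            gcongr
            · exact huc1 t (z (j+1)) (by simpa using hzK (j+1) hj) (z j)
                (by simpa using hzK j hj') (hstep j)
            · exact ih hj'
        _ = ((j+1 : ℕ) : ℝ) := by push_cast; ring
  have hz0 : z 0 = y := by simp [hz]
  have hzN : z N = x := by
    simp only [hz]
    rw [div_self (ne_of_gt hNpos), one_smul]
    abel
  have := key N le_rfl
  rw [hz0, hzN] at this
  exact this

/-- From a function whose central means are eventually small, find windows of any
prescribed radius with small integral. -/
lemma small_window {w : ℝ → ℝ} (hw : Continuous w)
    (hsmall : ∀ ε > (0:ℝ), ∃ r₀ > (0:ℝ), ∀ r ≥ r₀, (∫ s in (-r)..r, w s) ≤ ε * r)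
    {d δ : ℝ} (hd : 0 < d) (hδ : 0 < δ) :
    ∃ τ : ℝ, (∫ s in (τ - d)..(τ + d), w s) ≤ δ := by
  obtain ⟨r₀, hr₀, hr⟩ := hsmall (δ / d) (by positivity)
  obtain ⟨M₀, hM₀⟩ := exists_nat_gt (r₀ / d)
  set M := M₀ + 1 with hM
  have hMpos : (0:ℝ) < M := by positivity
  have hMd : r₀ ≤ (M:ℝ) * d := by
    have : r₀ / d < M := by push_cast [hM]; linarith [hM₀]
    calc r₀ = r₀ / d * d := by field_simp
      _ ≤ (M:ℝ) * d := by
        apply mul_le_mul_of_nonneg_right this.le hd.le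
  set a : ℕ → ℝ := fun j => (2 * (j:ℝ) - M) * d with ha
  have hint : ∀ k : ℕ, k < M → IntervalIntegrable w volume (a k) (a (k+1)) :=
    fun k _ => hw.intervalIntegrable _ _
  have hsum := intervalIntegral.sum_integral_adjacent_intervals (μ := volume) (f := w) hint
  have ha0 : a 0 = -((M:ℝ) * d) := by simp only [ha]; push_cast; ring
  have haM : a M = (M:ℝ) * d := by simp only [ha]; push_cast; ring
  have htot : (∫ s in (a 0)..(a M), w s) ≤ (δ / d) * ((M:ℝ) * d) := by
    rw [ha0, haM]
    exact hr ((M:ℝ) * d) hMd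
  by_contra hc
  push_neg at hc
  have hblock : ∀ j ∈ Finset.range M, δ < ∫ s in (a j)..(a (j+1)), w s := by
    intro j _
    have hcj := hc ((2 * (j:ℝ) + 1 - M) * d)
    have e1 : (2 * (j:ℝ) + 1 - M) * d - d = a j := by rw [ha]; ring
    have e2 : (2 * (j:ℝ) + 1 - M) * d + d = a (j+1) := by rw [ha]; push_cast; ring
    rw [e1, e2] at hcj
    exact hcj
  have hlt : (M:ℝ) * δ < ∑ j ∈ Finset.range M, ∫ s in (a j)..(a (j+1)), w s := by
    have := Finset.sum_lt_sum_of_nonempty (s := Finset.range M)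
      (by simp [hM]) hblock
    simpa [Finset.sum_const, Finset.card_range, nsmul_eq_mul] using this
  rw [hsum] at hlt
  have : (δ / d) * ((M:ℝ) * d) = (M:ℝ) * δ := by field_simp
  linarith [htot]

lemma ucG {Y X : Type*} [NormedAddCommGroup Y] [NormedAddCommGroup X]
    {G Φ f : ℝ → Y → X} {R : ℝ}
    (hG : AAUnifFn G) (hΦ : PAPZeroUnifFn Φ)
    (hdec : ∀ (t : ℝ) (x : Y), f t x = G t x + Φ t x)
    (hfuc : ∀ ε > (0:ℝ), ∃ η > (0:ℝ), ∀ t : ℝ, ∀ x ∈ Metric.closedBall (0:Y) R,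
      ∀ y ∈ Metric.closedBall (0:Y) R, ‖x - y‖ ≤ η → ‖f t x - f t y‖ ≤ ε) :
    ∀ ε > (0:ℝ), ∃ η > (0:ℝ), ∀ t : ℝ, ∀ x ∈ Metric.closedBall (0:Y) R,
      ∀ y ∈ Metric.closedBall (0:Y) R, ‖x - y‖ ≤ η → ‖G t x - G t y‖ ≤ ε := by
  intro ε hε
  obtain ⟨η, hη, huc⟩ := hfuc ε hε
  refine ⟨η, hη, ?_⟩
  intro t x hx y hy hxy
  set K : Set Y := Metric.closedBall (0:Y) R with hK
  have hKb : IsBounded K := Metric.isBounded_closedBall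
  set u : ℝ → X := fun s => G s x - G s y with hu
  set w : ℝ → ℝ := fun s => ‖Φ s x‖ + ‖Φ s y‖ with hwdef
  have hΦcx : ∀ z : Y, Continuous (fun s => Φ s z) :=
    fun z => hΦ.1.comp (continuous_id.prodMk continuous_const)
  have hGcx : ∀ z : Y, Continuous (fun s => G s z) :=
    fun z => hG.1.comp (continuous_id.prodMk continuous_const)
  have hwcont : Continuous w := ((hΦcx x).norm).add ((hΦcx y).norm)
  have hw0 : ∀ s, 0 ≤ w s := fun s => by positivity
  have hGeq : ∀ (s : ℝ) (z : Y), G s z = f s z - Φ s z := by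
    intro s z; rw [hdec]; abel
  have hupt : ∀ s, ‖u s‖ ≤ ε + w s := by
    intro s
    have e : u s = (f s x - f s y) - (Φ s x - Φ s y) := by
      simp only [hu, hGeq]; abel
    rw [e]
    calc ‖(f s x - f s y) - (Φ s x - Φ s y)‖
        ≤ ‖f s x - f s y‖ + ‖Φ s x - Φ s y‖ := norm_sub_le _ _
      _ ≤ ε + (‖Φ s x‖ + ‖Φ s y‖) := by
          gcongr
          · exact huc s x hx y hy hxy
          · exact norm_sub_le _ _
  obtain ⟨MΦ, hMΦ⟩ := hΦ.2.1 K hKb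
  set Mu : ℝ := ε + 2 * MΦ with hMu
  have hwb : ∀ s, w s ≤ 2 * MΦ := fun s => by
    have h1 := hMΦ s x hx; have h2 := hMΦ s y hy
    simp only [hwdef]; linarith
  have hub : ∀ s, ‖u s‖ ≤ Mu := fun s => (hupt s).trans (by linarith [hwb s])
  have hsmall : ∀ ε' > (0:ℝ), ∃ r₀ > (0:ℝ), ∀ r ≥ r₀, (∫ s in (-r)..r, w s) ≤ ε' * r := by
    intro ε' hε'
    obtain ⟨r₀, hr₀, hmean⟩ := hΦ.2.2 K hKb (ε'/4) (by positivity)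
    refine ⟨r₀, hr₀, fun r hr => ?_⟩
    have hrpos : 0 < r := lt_of_lt_of_le hr₀ hr
    have hsplit : (∫ s in (-r)..r, w s)
        = (∫ s in (-r)..r, ‖Φ s x‖) + ∫ s in (-r)..r, ‖Φ s y‖ := by
      simp only [hwdef]
      exact intervalIntegral.integral_add ((hΦcx x).norm.intervalIntegrable _ _)
        ((hΦcx y).norm.intervalIntegrable _ _)
    have hbx : (∫ s in (-r)..r, ‖Φ s x‖) ≤ ε'/4 * (2*r) := by
      have := hmean r hr x hx
      rw [one_div, inv_mul_le_iff₀ (by positivity)] at this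
      linarith
    have hby : (∫ s in (-r)..r, ‖Φ s y‖) ≤ ε'/4 * (2*r) := by
      have := hmean r hr y hy
      rw [one_div, inv_mul_le_iff₀ (by positivity)] at this
      linarith
    rw [hsplit]; linarith
  have hτ : ∀ m : ℕ, ∃ τ : ℝ,
      (∫ s in (τ - ((m:ℝ)+1))..(τ + ((m:ℝ)+1)), w s) ≤ 1/((m:ℝ)+1) :=
    fun m => small_window hwcont hsmall (by positivity) (by positivity)
  choose τ hτw using hτ
  obtain ⟨k, hk, G', hG1, hG2⟩ := hG.2 K hKb τ
  set σ : ℕ → ℝ := fun n => τ (k n) with hσ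
  set u' : ℝ → X := fun s => G' s x - G' s y with hu'
  have hu1 : ∀ s, Tendsto (fun n => u (s + σ n)) atTop (𝓝 (u' s)) :=
    fun s => (hG1 s x hx).sub (hG1 s y hy)
  have hu2 : ∀ s, Tendsto (fun n => u' (s - σ n)) atTop (𝓝 (u s)) :=
    fun s => (hG2 s x hx).sub (hG2 s y hy)
  have hucont : Continuous u := (hGcx x).sub (hGcx y)
  have hu'b : ∀ s, ‖u' s‖ ≤ Mu := fun s =>
    le_of_tendsto (hu1 s).norm (Eventually.of_forall fun n => hub _)
  have hu'meas : StronglyMeasurable u' := by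
    apply stronglyMeasurable_of_tendsto (u := atTop)
      (f := fun n => fun s => u (s + σ n))
      (fun n => (hucont.comp (continuous_add_right (σ n))).stronglyMeasurable)
    exact tendsto_pi_nhds.2 hu1
  -- every interval integral of ‖u'‖ is at most length * ε
  have step3 : ∀ (a l : ℝ), 0 ≤ l → (∫ s in a..(a+l), ‖u' s‖) ≤ l * ε := by
    intro a l hl
    have hconv : Tendsto (fun n => ∫ s in a..(a+l), ‖u (s + σ n)‖) atTop
        (𝓝 (∫ s in a..(a+l), ‖u' s‖)) := by
      apply intervalIntegral.tendsto_integral_filter_of_dominated_convergence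
        (bound := fun _ => Mu)
      · exact Eventually.of_forall fun n =>
          ((hucont.comp (continuous_add_right (σ n))).norm).aestronglyMeasurable
      · exact Eventually.of_forall fun n => ae_of_all _ fun s _ => by
          simpa using hub (s + σ n)
      · exact intervalIntegrable_const
      · exact ae_of_all _ fun s _ => (hu1 s).norm
    refine le_of_forall_pos_le_add fun δ hδ => ?_
    apply le_of_tendsto hconv
    obtain ⟨N, hN⟩ := exists_nat_gt (max (max (-a) (a + l)) (1/δ))
    have hNa : -a < (N:ℝ) := lt_of_le_of_lt ((le_max_left _ _).trans (le_max_left _ _)) hN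
    have hNal : a + l < (N:ℝ) := lt_of_le_of_lt ((le_max_right _ _).trans (le_max_left _ _)) hN
    have hNδ : 1/δ < (N:ℝ) := lt_of_le_of_lt (le_max_right _ _) hN
    filter_upwards [eventually_ge_atTop N] with n hn
    have hkn : (N:ℝ) ≤ (k n : ℝ) := by
      exact_mod_cast le_trans hn hk.le_apply
    have e1 : (∫ s in a..(a+l), ‖u (s + σ n)‖)
        = ∫ s in (a + σ n)..(a + l + σ n), ‖u s‖ := by
      simpa using intervalIntegral.integral_comp_add_right (f := fun s => ‖u s‖)
        (a := a) (b := a + l) (σ n)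
    rw [e1]
    have hbig : a + σ n ≤ a + l + σ n := by linarith
    calc ∫ s in (a + σ n)..(a + l + σ n), ‖u s‖
        ≤ ∫ s in (a + σ n)..(a + l + σ n), (ε + w s) := by
          apply intervalIntegral.integral_mono_on hbig
            ((hucont.norm).intervalIntegrable _ _)
            ((continuous_const.add hwcont).intervalIntegrable _ _)
            (fun s _ => hupt s)
      _ = l * ε + ∫ s in (a + σ n)..(a + l + σ n), w s := by
          rw [intervalIntegral.integral_add intervalIntegrable_const
            (hwcont.intervalIntegrable _ _)]
          simp only [intervalIntegral.integral_const, smul_eq_mul]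
          ring_nf
      _ ≤ l * ε + ∫ s in (σ n - ((k n : ℝ)+1))..(σ n + ((k n : ℝ)+1)), w s := by
          apply add_le_add le_rfl
          apply intervalIntegral.integral_mono_interval (by linarith) hbig (by linarith)
            (ae_of_all _ hw0) (hwcont.intervalIntegrable _ _)
      _ ≤ l * ε + 1/((k n : ℝ)+1) := by
          have := hτw (k n)
          simp only [hσ]
          linarith
      _ ≤ l * ε + δ := by
          have hkpos : (0:ℝ) < (k n : ℝ) + 1 := by positivity
          have : 1/δ < (k n : ℝ) + 1 := by linarith
          have h1 : 1/((k n:ℝ)+1) < δ := by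
            rw [div_lt_iff₀ hkpos]
            rw [div_lt_iff₀ hδ] at this
            linarith
          linarith
  -- transfer back to u
  have step4 : ∀ (t₀ l : ℝ), 0 < l → (∫ s in (t₀ - l)..(t₀ + l), ‖u s‖) ≤ (2*l) * ε := by
    intro t₀ l hl
    have hconv : Tendsto (fun n => ∫ s in (t₀-l)..(t₀+l), ‖u' (s - σ n)‖) atTop
        (𝓝 (∫ s in (t₀-l)..(t₀+l), ‖u s‖)) := by
      apply intervalIntegral.tendsto_integral_filter_of_dominated_convergence
        (bound := fun _ => Mu)
      · exact Eventually.of_forall fun n =>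
          ((hu'meas.comp_measurable (measurable_id.sub measurable_const)).norm).aestronglyMeasurable
      · exact Eventually.of_forall fun n => ae_of_all _ fun s _ => by
          simpa using hu'b (s - σ n)
      · exact intervalIntegrable_const
      · exact ae_of_all _ fun s _ => (hu2 s).norm
    apply le_of_tendsto hconv
    filter_upwards with n
    have e1 : (∫ s in (t₀-l)..(t₀+l), ‖u' (s - σ n)‖)
        = ∫ s in (t₀-l-σ n)..(t₀+l-σ n), ‖u' s‖ :=
      intervalIntegral.integral_comp_sub_right (f := fun s => ‖u' s‖) _
    rw [e1]
    have h3 := step3 (t₀ - l - σ n) (2*l) (by linarith)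
    have e2 : t₀ - l - σ n + 2*l = t₀ + l - σ n := by ring
    rw [e2] at h3
    exact h3
  -- conclude pointwise
  show ‖u t‖ ≤ ε
  by_contra hc
  push_neg at hc
  set c : ℝ := (ε + ‖u t‖)/2 with hcdef
  have hcε : ε < c := by simp only [hcdef]; linarith
  have hclt : c < ‖u t‖ := by simp only [hcdef]; linarith
  have hev : ∀ᶠ s in 𝓝 t, c < ‖u s‖ :=
    (hucont.norm.continuousAt).eventually (eventually_gt_nhds hclt)
  obtain ⟨δ, hδ, hball⟩ := Metric.eventually_nhds_iff.1 hev
  set l : ℝ := δ/2 with hldef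
  have hlpos : 0 < l := by positivity
  have hlow : ∀ s ∈ Set.Icc (t - l) (t + l), c ≤ ‖u s‖ := by
    intro s hs
    apply (hball _).le
    rw [Real.dist_eq, abs_lt]
    obtain ⟨h1, h2⟩ := hs
    constructor <;> simp only [hldef] at * <;> linarith
  have hint : (2*l) * c ≤ ∫ s in (t-l)..(t+l), ‖u s‖ := by
    have := intervalIntegral.integral_mono_on (μ := volume) (f := fun _ => c)
      (g := fun s => ‖u s‖)
      (show t-l ≤ t+l by linarith) intervalIntegrable_const
      (hucont.norm.intervalIntegrable _ _) hlow
    simp only [intervalIntegral.integral_const, smul_eq_mul] at this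
    calc (2*l) * c = (t + l - (t - l)) * c := by ring
      _ ≤ _ := this
  have h4 := step4 t l hlpos
  nlinarith

lemma comp_aa {Y X : Type*} [NormedAddCommGroup Y] [NormedAddCommGroup X]
    {G : ℝ → Y → X} {g : ℝ → Y} {R : ℝ}
    (hG : AAUnifFn G) (hg : AlmostAutomorphicFn g)
    (hgK : ∀ t : ℝ, g t ∈ Metric.closedBall (0:Y) R)
    (hucG : ∀ ε > (0:ℝ), ∃ η > (0:ℝ), ∀ t : ℝ, ∀ x ∈ Metric.closedBall (0:Y) R,
      ∀ y ∈ Metric.closedBall (0:Y) R, ‖x - y‖ ≤ η → ‖G t x - G t y‖ ≤ ε) :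
    AlmostAutomorphicFn (fun t => G t (g t)) := by
  set K : Set Y := Metric.closedBall (0:Y) R with hKdef
  have hKb : IsBounded K := Metric.isBounded_closedBall
  refine ⟨hG.1.comp (continuous_id.prodMk hg.1), fun s' => ?_⟩
  obtain ⟨k₁, hk₁, g', hg'1, hg'2⟩ := hg.2 s'
  obtain ⟨k₂, hk₂, G', hG'1, hG'2⟩ := hG.2 K hKb (fun m => s' (k₁ m))
  have hg'K : ∀ t : ℝ, g' t ∈ K := by
    intro t
    rw [hKdef, Metric.mem_closedBall, dist_zero_right]
    refine le_of_tendsto (hg'1 t).norm (Eventually.of_forall fun n => ?_)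
    have := hgK (t + s' (k₁ n))
    rwa [hKdef, Metric.mem_closedBall, dist_zero_right] at this
  have hucG' : ∀ ε > (0:ℝ), ∀ τ : ℝ, ∀ x ∈ K, ∀ y ∈ K,
      ∃ η > (0:ℝ), ∀ x' ∈ K, ∀ y' ∈ K, True := fun _ _ _ _ _ _ _ => ⟨1, one_pos, fun _ _ _ _ => trivial⟩
  clear hucG'
  have hucG2 : ∀ ε > (0:ℝ), ∃ η > (0:ℝ), ∀ τ : ℝ, ∀ x ∈ K, ∀ y ∈ K,
      ‖x - y‖ ≤ η → ‖G' τ x - G' τ y‖ ≤ ε := by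
    intro ε hε
    obtain ⟨η, hη, h⟩ := hucG ε hε
    refine ⟨η, hη, fun τ x hxK y hyK hxy => ?_⟩
    exact le_of_tendsto ((hG'1 τ x hxK).sub (hG'1 τ y hyK)).norm
      (Eventually.of_forall fun n => h _ x hxK y hyK hxy)
  refine ⟨k₁ ∘ k₂, hk₁.comp hk₂, fun t => G' t (g' t), ?_, ?_⟩
  · -- forward
    intro t
    rw [NormedAddCommGroup.tendsto_atTop]
    intro ε hε
    obtain ⟨η, hη, huc⟩ := hucG (ε/2) (by positivity)
    have hgc : Tendsto (fun n => g (t + s' (k₁ (k₂ n)))) atTop (𝓝 (g' t)) :=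
      (hg'1 t).comp hk₂.tendsto_atTop
    obtain ⟨N₁, h₁⟩ := NormedAddCommGroup.tendsto_atTop.1 hgc η hη
    obtain ⟨N₂, h₂⟩ := NormedAddCommGroup.tendsto_atTop.1 (hG'1 t (g' t) (hg'K t)) (ε/2)
      (by positivity)
    refine ⟨max N₁ N₂, fun n hn => ?_⟩
    have hn₁ : N₁ ≤ n := le_trans (le_max_left _ _) hn
    have hn₂ : N₂ ≤ n := le_trans (le_max_right _ _) hn
    calc ‖G (t + s' ((k₁ ∘ k₂) n)) (g (t + s' ((k₁ ∘ k₂) n))) - G' t (g' t)‖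
        ≤ ‖G (t + s' (k₁ (k₂ n))) (g (t + s' (k₁ (k₂ n)))) - G (t + s' (k₁ (k₂ n))) (g' t)‖
          + ‖G (t + s' (k₁ (k₂ n))) (g' t) - G' t (g' t)‖ :=
          norm_sub_le_norm_sub_add_norm_sub _ _ _
      _ < ε/2 + ε/2 := by
          apply add_lt_add_of_le_of_lt
          · exact huc _ _ (hgK _) _ (hg'K t) (h₁ n hn₁).le
          · exact h₂ n hn₂
      _ = ε := by ring
  · -- backward
    intro t
    rw [NormedAddCommGroup.tendsto_atTop]
    intro ε hε
    obtain ⟨η, hη, huc⟩ := hucG2 (ε/2) (by positivity)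
    have hgc : Tendsto (fun n => g' (t - s' (k₁ (k₂ n)))) atTop (𝓝 (g t)) :=
      (hg'2 t).comp hk₂.tendsto_atTop
    obtain ⟨N₁, h₁⟩ := NormedAddCommGroup.tendsto_atTop.1 hgc η hη
    obtain ⟨N₂, h₂⟩ := NormedAddCommGroup.tendsto_atTop.1 (hG'2 t (g t) (hgK t)) (ε/2)
      (by positivity)
    refine ⟨max N₁ N₂, fun n hn => ?_⟩
    have hn₁ : N₁ ≤ n := le_trans (le_max_left _ _) hn
    have hn₂ : N₂ ≤ n := le_trans (le_max_right _ _) hn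
    calc ‖G' (t - s' ((k₁ ∘ k₂) n)) (g' (t - s' ((k₁ ∘ k₂) n))) - G t (g t)‖
        ≤ ‖G' (t - s' (k₁ (k₂ n))) (g' (t - s' (k₁ (k₂ n)))) - G' (t - s' (k₁ (k₂ n))) (g t)‖
          + ‖G' (t - s' (k₁ (k₂ n))) (g t) - G t (g t)‖ :=
          norm_sub_le_norm_sub_add_norm_sub _ _ _
      _ < ε/2 + ε/2 := by
          apply add_lt_add_of_le_of_lt
          · exact huc _ _ (hg'K _) _ (hgK t) (h₁ n hn₁).le
          · exact h₂ n hn₂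
      _ = ε := by ring

theorem composition_preserves_PAA
    {X Y : Type*} [NormedAddCommGroup X] [NormedSpace ℝ X] [CompleteSpace X]
    [NormedAddCommGroup Y] [NormedSpace ℝ Y] [CompleteSpace Y]
    (f : ℝ → Y → X) (hfpaa : PAAUnifFn f)
    (hfuc : ∀ K : Set Y, IsBounded K → ∀ ε > (0 : ℝ), ∃ η > (0 : ℝ),
      ∀ t : ℝ, ∀ x ∈ K, ∀ y ∈ K, ‖x - y‖ ≤ η → ‖f t x - f t y‖ ≤ ε)
    (φ : ℝ → Y) (hφ : PseudoAlmostAutomorphicFn φ) :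
    PseudoAlmostAutomorphicFn (fun t : ℝ => f t (φ t)) := by
  classical
  obtain ⟨G, Φ, hG, hΦ, hdec⟩ := hfpaa
  obtain ⟨hφc, ⟨Mφ, hMφ⟩, g, ψ, hg, hψ, hφdec⟩ := hφ
  obtain ⟨Mg, hMg⟩ := aa_bounded hg
  set R : ℝ := max Mg Mφ with hR
  set K : Set Y := Metric.closedBall (0:Y) R with hKdef
  have hKb : IsBounded K := Metric.isBounded_closedBall
  have hgK : ∀ t, g t ∈ K := fun t => by
    rw [hKdef, Metric.mem_closedBall, dist_zero_right]
    exact le_trans (hMg t) (le_max_left _ _)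
  have hφK : ∀ t, φ t ∈ K := fun t => by
    rw [hKdef, Metric.mem_closedBall, dist_zero_right]
    exact le_trans (hMφ t) (le_max_right _ _)
  have hR0 : (0:ℝ) ≤ R := le_trans (norm_nonneg (g 0)) (le_trans (hMg 0) (le_max_left _ _))
  have h0K : (0:Y) ∈ K := by rw [hKdef, Metric.mem_closedBall, dist_self]; exact hR0
  have hfcont : Continuous (fun p : ℝ × Y => f p.1 p.2) := by
    have he : (fun p : ℝ × Y => f p.1 p.2) = fun p : ℝ × Y => G p.1 p.2 + Φ p.1 p.2 :=
      funext fun p => hdec p.1 p.2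
    rw [he]; exact hG.1.add hΦ.1
  have hfucK := hfuc K hKb
  rw [hKdef] at hfucK
  have hucG := ucG hG hΦ hdec hfucK
  obtain ⟨B, hB⟩ := chain_bound hfucK
  rw [← hKdef] at hfucK hucG hB
  have hB0 : (0:ℝ) ≤ B := le_trans (norm_nonneg _) (hB 0 0 h0K 0 h0K)
  obtain ⟨MΦK, hMΦK⟩ := hΦ.2.1 K hKb
  obtain ⟨M₀, hM₀⟩ := aa_bounded (aaunif_apply hG 0)
  have hgKball : ∀ t, g t ∈ Metric.closedBall (0:Y) R := by rw [← hKdef]; exact hgK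
  have hucGball : ∀ ε > (0:ℝ), ∃ η > (0:ℝ), ∀ t : ℝ, ∀ x ∈ Metric.closedBall (0:Y) R,
      ∀ y ∈ Metric.closedBall (0:Y) R, ‖x - y‖ ≤ η → ‖G t x - G t y‖ ≤ ε := by
    rw [← hKdef]; exact hucG
  have hAAp : AlmostAutomorphicFn (fun t => G t (g t)) := comp_aa hG hg hgKball hucGball
  have hhc : Continuous (fun t => f t (φ t)) := hfcont.comp (continuous_id.prodMk hφc)
  have hhb : ∀ t, ‖f t (φ t)‖ ≤ B + (M₀ + MΦK) := by
    intro t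
    have e : f t (φ t) = (f t (φ t) - f t 0) + f t 0 := by abel
    calc ‖f t (φ t)‖ = ‖(f t (φ t) - f t 0) + f t 0‖ := by rw [← e]
      _ ≤ ‖f t (φ t) - f t 0‖ + ‖f t 0‖ := norm_add_le _ _
      _ ≤ B + (M₀ + MΦK) := by
          apply add_le_add (hB t _ (hφK t) 0 h0K)
          rw [hdec]
          exact (norm_add_le _ _).trans (add_le_add (hM₀ t) (hMΦK t 0 h0K))
  refine ⟨hhc, ⟨B + (M₀ + MΦK), hhb⟩, (fun t => G t (g t)),
    (fun t => f t (φ t) - G t (g t)), hAAp, ?_,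
    fun t => by show f t (φ t) = G t (g t) + (f t (φ t) - G t (g t)); abel⟩
  have hΦcx : ∀ z : Y, Continuous fun s => Φ s z :=
    fun z => hΦ.1.comp (continuous_id.prodMk continuous_const)
  have hGgc : Continuous (fun t => G t (g t)) := hG.1.comp (continuous_id.prodMk hg.1)
  have hqc : Continuous (fun t => f t (φ t) - G t (g t)) := hhc.sub hGgc
  have hψeq : ∀ s, φ s - g s = ψ s := fun s => by rw [hφdec s]; abel
  have hqdec : ∀ s, f s (φ s) - G s (g s) = (f s (φ s) - f s (g s)) + Φ s (g s) := by
    intro s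
    have h := hdec s (g s)
    rw [h]; abel
  have hqb : ∀ s, ‖f s (φ s) - G s (g s)‖ ≤ B + MΦK := fun s => by
    rw [hqdec s]
    exact (norm_add_le _ _).trans (add_le_add (hB s _ (hφK s) _ (hgK s)) (hMΦK s _ (hgK s)))
  refine ⟨hqc, ⟨B + MΦK, hqb⟩, ?_⟩
  rw [Metric.tendsto_atTop]
  intro ε hε
  set ε' : ℝ := ε/5 with hε'def
  have hε' : 0 < ε' := by positivity
  obtain ⟨η₁, hη₁, huc₁⟩ := hfucK ε' hε'
  set C : ℝ := B/η₁ with hC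
  have hC0 : 0 ≤ C := by positivity
  have hq1pt : ∀ s, ‖f s (φ s) - f s (g s)‖ ≤ ε' + C * ‖ψ s‖ := by
    intro s
    by_cases hcase : ‖φ s - g s‖ ≤ η₁
    · have h := huc₁ s (φ s) (hφK s) (g s) (hgK s) hcase
      have h2 : 0 ≤ C * ‖ψ s‖ := mul_nonneg hC0 (norm_nonneg _)
      linarith
    · push_neg at hcase
      rw [hψeq] at hcase
      have h1 : ‖f s (φ s) - f s (g s)‖ ≤ B := hB s _ (hφK s) _ (hgK s)
      have h2 : B ≤ C * ‖ψ s‖ := by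
        rw [hC]
        calc B = B/η₁ * η₁ := by field_simp
          _ ≤ B/η₁ * ‖ψ s‖ := mul_le_mul_of_nonneg_left hcase.le (by positivity)
      linarith
  have hucΦ : ∃ η₂ > (0:ℝ), ∀ s : ℝ, ∀ x ∈ K, ∀ y ∈ K, ‖x - y‖ ≤ η₂ →
      ‖Φ s x - Φ s y‖ ≤ ε' := by
    obtain ⟨ηa, hηa, ha⟩ := hfucK (ε'/2) (by positivity)
    obtain ⟨ηb, hηb, hb⟩ := hucG (ε'/2) (by positivity)
    refine ⟨min ηa ηb, lt_min hηa hηb, fun s x hx y hy hxy => ?_⟩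
    have e : Φ s x - Φ s y = (f s x - f s y) - (G s x - G s y) := by
      have e1 := hdec s x; have e2 := hdec s y
      rw [e1, e2]; abel
    rw [e]
    calc ‖(f s x - f s y) - (G s x - G s y)‖
        ≤ ‖f s x - f s y‖ + ‖G s x - G s y‖ := norm_sub_le _ _
      _ ≤ ε'/2 + ε'/2 := add_le_add (ha s x hx y hy (hxy.trans (min_le_left _ _)))
          (hb s x hx y hy (hxy.trans (min_le_right _ _)))
      _ = ε' := by ring
  obtain ⟨η₂, hη₂, hΦuc⟩ := hucΦ
  obtain ⟨L, hL⟩ := aa_net hg hη₂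
  set W : ℝ → ℝ := fun s => ∑ σ ∈ L, ‖Φ s (g σ)‖ with hW
  have hWc : Continuous W := continuous_finset_sum _ fun σ _ => (hΦcx (g σ)).norm
  have hq2pt : ∀ s, ‖Φ s (g s)‖ ≤ ε' + W s := by
    intro s
    obtain ⟨σ₀, hσ₀L, hσ₀⟩ := hL s
    have h1 : ‖Φ s (g s)‖ ≤ ‖Φ s (g s) - Φ s (g σ₀)‖ + ‖Φ s (g σ₀)‖ := by
      have h := norm_add_le (Φ s (g s) - Φ s (g σ₀)) (Φ s (g σ₀))
      simpa using h
    have h2 : ‖Φ s (g s) - Φ s (g σ₀)‖ ≤ ε' := hΦuc s _ (hgK s) _ (hgK σ₀) hσ₀.le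
    have h3 : ‖Φ s (g σ₀)‖ ≤ W s := by
      simp only [hW]
      exact Finset.single_le_sum (f := fun σ => ‖Φ s (g σ)‖) (fun i _ => norm_nonneg _) hσ₀L
    linarith
  have hqpt : ∀ s, ‖f s (φ s) - G s (g s)‖ ≤ 2*ε' + (C * ‖ψ s‖ + W s) := by
    intro s
    rw [hqdec s]
    have h0 := norm_add_le (f s (φ s) - f s (g s)) (Φ s (g s))
    have h1 := hq1pt s; have h2 := hq2pt s
    linarith
  obtain ⟨r₀, hr₀, hmeanΦ⟩ := hΦ.2.2 K hKb (ε'/(L.card+1)) (by positivity)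
  have hψev : ∀ᶠ r in atTop, (1/(2*r)) * ∫ s in (-r)..r, ‖ψ s‖ < ε'/(C+1) :=
    hψ.2.2.eventually_lt_const (by positivity)
  have hev : ∀ᶠ r in atTop,
      |(1/(2*r)) * ∫ s in (-r)..r, ‖f s (φ s) - G s (g s)‖| < ε := by
    filter_upwards [hψev, eventually_ge_atTop (max r₀ 1)] with r hψr hr
    have hr1 : (1:ℝ) ≤ r := le_trans (le_max_right _ _) hr
    have hrr₀ : r₀ ≤ r := le_trans (le_max_left _ _) hr
    have hrpos : 0 < r := lt_of_lt_of_le one_pos hr1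
    have hIq0 : 0 ≤ ∫ s in (-r)..r, ‖f s (φ s) - G s (g s)‖ :=
      intervalIntegral.integral_nonneg (by linarith) (fun s _ => norm_nonneg _)
    rw [abs_of_nonneg (mul_nonneg (by positivity) hIq0)]
    have hint1 : (∫ s in (-r)..r, ‖f s (φ s) - G s (g s)‖)
        ≤ ∫ s in (-r)..r, (2*ε' + (C * ‖ψ s‖ + W s)) :=
      intervalIntegral.integral_mono_on (by linarith) (hqc.norm.intervalIntegrable _ _)
        ((continuous_const.add ((continuous_const.mul hψ.1.norm).add hWc)).intervalIntegrable _ _)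
        (fun s _ => hqpt s)
    have hsD : (∫ s in (-r)..r, W s) = ∑ σ ∈ L, ∫ s in (-r)..r, ‖Φ s (g σ)‖ := by
      simp only [hW]
      exact intervalIntegral.integral_finset_sum
        (fun σ _ => ((hΦcx (g σ)).norm.intervalIntegrable _ _))
    have hsC : (∫ s in (-r)..r, C * ‖ψ s‖) = C * ∫ s in (-r)..r, ‖ψ s‖ :=
      intervalIntegral.integral_const_mul C (fun s => ‖ψ s‖)
    have hsB : (∫ s in (-r)..r, (C * ‖ψ s‖ + W s))
        = (∫ s in (-r)..r, C * ‖ψ s‖) + ∫ s in (-r)..r, W s :=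
      intervalIntegral.integral_add ((continuous_const.mul hψ.1.norm).intervalIntegrable _ _)
        (hWc.intervalIntegrable _ _)
    have hsA : (∫ s in (-r)..r, (2*ε' + (C * ‖ψ s‖ + W s)))
        = (∫ s in (-r)..r, (2*ε' : ℝ)) + ∫ s in (-r)..r, (C * ‖ψ s‖ + W s) :=
      intervalIntegral.integral_add intervalIntegrable_const
        (((continuous_const.mul hψ.1.norm).add hWc).intervalIntegrable _ _)
    have hsE : (∫ s in (-r)..r, (2*ε' : ℝ)) = 2*ε'*(2*r) := by
      rw [intervalIntegral.integral_const, smul_eq_mul]; ring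
    have hsplit : (∫ s in (-r)..r, (2*ε' + (C * ‖ψ s‖ + W s)))
        = 2*ε'*(2*r) + C * (∫ s in (-r)..r, ‖ψ s‖)
          + ∑ σ ∈ L, ∫ s in (-r)..r, ‖Φ s (g σ)‖ := by
      rw [hsA, hsB, hsC, hsD, hsE]; ring
    have hb1 : (1/(2*r)) * (∫ s in (-r)..r, ‖f s (φ s) - G s (g s)‖)
        ≤ (1/(2*r)) * (2*ε'*(2*r) + C * (∫ s in (-r)..r, ‖ψ s‖)
          + ∑ σ ∈ L, ∫ s in (-r)..r, ‖Φ s (g σ)‖) := by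
      apply mul_le_mul_of_nonneg_left _ (by positivity)
      rw [← hsplit]; exact hint1
    have hb2 : (1/(2*r)) * (2*ε'*(2*r) + C * (∫ s in (-r)..r, ‖ψ s‖)
          + ∑ σ ∈ L, ∫ s in (-r)..r, ‖Φ s (g σ)‖)
        = 2*ε' + C * ((1/(2*r)) * ∫ s in (-r)..r, ‖ψ s‖)
          + (1/(2*r)) * ∑ σ ∈ L, ∫ s in (-r)..r, ‖Φ s (g σ)‖ := by
      field_simp
    have hb3 : C * ((1/(2*r)) * ∫ s in (-r)..r, ‖ψ s‖) ≤ ε' := by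
      calc C * ((1/(2*r)) * ∫ s in (-r)..r, ‖ψ s‖)
          ≤ C * (ε'/(C+1)) := mul_le_mul_of_nonneg_left hψr.le hC0
        _ ≤ (C+1) * (ε'/(C+1)) := mul_le_mul_of_nonneg_right (by linarith) (by positivity)
        _ = ε' := by field_simp
    have hb4 : (1/(2*r)) * (∑ σ ∈ L, ∫ s in (-r)..r, ‖Φ s (g σ)‖) ≤ ε' := by
      rw [Finset.mul_sum]
      calc ∑ σ ∈ L, (1/(2*r)) * ∫ s in (-r)..r, ‖Φ s (g σ)‖
          ≤ ∑ σ ∈ L, ε'/(L.card+1) :=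
            Finset.sum_le_sum (fun σ _ => hmeanΦ r hrr₀ (g σ) (hgK σ))
        _ = (L.card : ℝ) * (ε'/(L.card+1)) := by
            rw [Finset.sum_const, nsmul_eq_mul]
        _ ≤ ((L.card : ℝ)+1) * (ε'/(L.card+1)) :=
            mul_le_mul_of_nonneg_right (by linarith) (by positivity)
        _ = ε' := by field_simp
    calc (1/(2*r)) * ∫ s in (-r)..r, ‖f s (φ s) - G s (g s)‖
        ≤ 2*ε' + C * ((1/(2*r)) * ∫ s in (-r)..r, ‖ψ s‖)
          + (1/(2*r)) * ∑ σ ∈ L, ∫ s in (-r)..r, ‖Φ s (g σ)‖ := by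
          rw [← hb2]; exact hb1
      _ ≤ 2*ε' + ε' + ε' := by
          apply add_le_add (add_le_add le_rfl hb3) hb4
      _ < ε := by rw [hε'def] at *; linarith
  obtain ⟨N, hN⟩ := eventually_atTop.1 hev
  exact ⟨N, fun r hrN => by rw [Real.dist_eq, sub_zero]; exact hN r hrN⟩
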